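/- Let X ⊂ Y be normed spaces, e ∈ 𝓔, θ ≥ 0, m ∈ ℕ*, and suppose y ∈ Y satisfies hypothesis H(θ,m,e): there exists a > 1 such that limsup_{R→∞} (1/R) L_a(R)^{1+θ/(2m)} β_e(L_a(R)^{d/(2m)}) d_Y(y, B_X(R)) < ∞, where L_a(R) = R(ln R)^a. Then one may find a sequence x_n ∈ X such that Σ_{n=1}^∞ [2^{nθ} β_e(2^{nd}) ‖y−x_n‖_Y + 2^{−2nm} ‖x_n‖_X] < ∞. -/

import Mathlib

open MeasureTheory ENNReal Filter

noncomputable section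

/-- Euclidean space `ℝ^d`. -/
abbrev Vec (d : ℕ) := EuclideanSpace ℝ (Fin d)

variable {d : ℕ}

/-- The class `𝓔` of Young functions: symmetric, strictly convex, nonnegative, vanishing at `0`,
satisfying the `Δ₂` (doubling) condition, and with `s ↦ e s / s` nondecreasing. -/
structure IsYoungE (e : ℝ → ℝ) : Prop where
  symm : ∀ s, e (-s) = e s
  nonneg : ∀ s, 0 ≤ e s
  zero : e 0 = 0
  strictConvexOn : StrictConvexOn ℝ Set.univ e
  delta2 : ∃ lam > 0, ∀ s, e (2 * s) ≤ lam * e s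
  ratio_mono : ∀ s t : ℝ, 0 < s → s ≤ t → e s / s ≤ e t / t

/-- Luxemburg norm `‖f‖_(e) = inf {c > 0 : ∫ e (f x / c) dx ≤ 1}` (with value `∞` if no such `c`). -/
def luxNorm (e : ℝ → ℝ) (f : Vec d → ℝ) : ℝ≥0∞ :=
  sInf {c : ℝ≥0∞ | 0 < c ∧ c ≠ ∞ ∧ ∫ x, e (f x / c.toReal) ≤ 1}

/-- `e⁻¹ a = sup {c : e c ≤ a}`. -/
def einv (e : ℝ → ℝ) (a : ℝ) : ℝ := sSup {c : ℝ | e c ≤ a}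

/-- `β_e R = R / e⁻¹ R`. -/
def betaE (e : ℝ → ℝ) (R : ℝ) : ℝ := R / einv e R

/-- Conjugate (Legendre transform) Young function `e_*`. -/
def econj (e : ℝ → ℝ) (s : ℝ) : ℝ := sSup {r : ℝ | ∃ t : ℝ, r = s * t - e t}

/-- Partial derivative in the `i`-th coordinate direction. -/
def pd (i : Fin d) (f : Vec d → ℝ) : Vec d → ℝ :=
  fun x => fderiv ℝ f x (EuclideanSpace.single i 1)

/-- Multi-index partial derivative `∂_α`. -/
def mderiv (α : Fin d → ℕ) (f : Vec d → ℝ) : Vec d → ℝ :=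
  (List.finRange d).foldl (fun g i => (pd i)^[α i] g) f

/-- Length `|α|` of a multi-index. -/
def mOrder (α : Fin d → ℕ) : ℕ := ∑ i, α i

/-- `‖φ‖_{k,∞} = Σ_{|α| ≤ k} ‖∂_α φ‖_∞` (as an extended real). -/
def supNorm (k : ℕ) (φ : Vec d → ℝ) : ℝ≥0∞ :=
  ∑' α : {α : Fin d → ℕ // mOrder α ≤ k}, ⨆ x : Vec d, ENNReal.ofReal |mderiv α.1 φ x|

/-- Weighted Orlicz–Sobolev norm `‖f‖_{k,l,(e)} = Σ_{|γ|≤l} Σ_{|α|≤k} ‖x^γ ∂_α f‖_(e)`. -/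
def wnorm (e : ℝ → ℝ) (k l : ℕ) (f : Vec d → ℝ) : ℝ≥0∞ :=
  ∑' γ : {γ : Fin d → ℕ // mOrder γ ≤ l}, ∑' α : {α : Fin d → ℕ // mOrder α ≤ k},
    luxNorm e (fun x => (∏ i, x i ^ γ.1 i) * mderiv α.1 f x)

/-- Integral of `φ` against a finite signed measure, via the Jordan decomposition. -/
def sInt (μ : SignedMeasure (Vec d)) (φ : Vec d → ℝ) : ℝ :=
  ∫ x, φ x ∂μ.toJordanDecomposition.posPart - ∫ x, φ x ∂μ.toJordanDecomposition.negPart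

/-- The distance `d_k(μ,ν) = sup {|∫φdμ − ∫φdν| : φ ∈ C^∞, ‖φ‖_{k,∞} ≤ 1}`. -/
def dk (k : ℕ) (μ ν : SignedMeasure (Vec d)) : ℝ :=
  sSup {r : ℝ | ∃ φ : Vec d → ℝ, ContDiff ℝ (⊤ : ℕ∞) φ ∧ supNorm k φ ≤ 1 ∧
    r = |sInt μ φ - sInt ν φ|}

/-- `μ ∈ 𝓜_a` with density `p` (absolute continuity w.r.t. Lebesgue measure). -/
def HasDensity (μ : SignedMeasure (Vec d)) (p : Vec d → ℝ) : Prop :=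
  Integrable p volume ∧ ∀ s : Set (Vec d), MeasurableSet s → μ s = ∫ x in s, p x

/-- `π_{q,k,m,e}(μ,(μ_n)_n)` where `p n` is the density of `ν n`. -/
def piApprox (e : ℝ → ℝ) (q k m : ℕ) (μ : SignedMeasure (Vec d))
    (ν : ℕ → SignedMeasure (Vec d)) (p : ℕ → Vec d → ℝ) : ℝ≥0∞ :=
  (∑' n : ℕ, (2 : ℝ≥0∞) ^ (n * (q + k)) * ENNReal.ofReal (betaE e ((2:ℝ) ^ (n * d))) *
      ENNReal.ofReal (dk k μ (ν n)))
  + ∑' n : ℕ, ((2 : ℝ≥0∞) ^ (2 * n * m))⁻¹ * wnorm e (2 * m + q) (2 * m) (p n)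

/-- `ρ_{q,k,m,e}(μ)`: infimum of `π_{q,k,m,e}(μ,(μ_n)_n)` over sequences of absolutely
continuous measures. -/
def rho (e : ℝ → ℝ) (q k m : ℕ) (μ : SignedMeasure (Vec d)) : ℝ≥0∞ :=
  ⨅ (ν : ℕ → SignedMeasure (Vec d)) (p : ℕ → Vec d → ℝ) (_ : ∀ n, HasDensity (ν n) (p n)),
    piApprox e q k m μ ν p

/-- `g` is the `α`-th distributional (weak) derivative of `f`. -/
def HasWeakDeriv (α : Fin d → ℕ) (f g : Vec d → ℝ) : Prop :=
  ∀ φ : Vec d → ℝ, ContDiff ℝ (⊤ : ℕ∞) φ → HasCompactSupport φ →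
    ∫ x, mderiv α φ x * f x = (-1 : ℝ) ^ mOrder α * ∫ x, φ x * g x

/-- `L_a(R) = R (ln R)^a`. -/
def La (a R : ℝ) : ℝ := R * Real.log R ^ a

/-- The set `M_{m,q,e}(R)` of absolutely continuous measures with `‖p_μ‖_{2m+q,2m,(e)} ≤ R`. -/
def Mset (e : ℝ → ℝ) (m q : ℕ) (R : ℝ) : Set (SignedMeasure (Vec d)) :=
  {ν | ∃ p : Vec d → ℝ, HasDensity ν p ∧ wnorm e (2 * m + q) (2 * m) p ≤ ENNReal.ofReal R}

/-- `d_k(μ, A) = inf_{ν ∈ A} d_k(μ,ν)`. -/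
def dkSet (k : ℕ) (μ : SignedMeasure (Vec d)) (A : Set (SignedMeasure (Vec d))) : ℝ :=
  sInf {r : ℝ | ∃ ν ∈ A, r = dk k μ ν}

/-- Hypothesis `H_q(k,m,e)` for `μ`. -/
def Hq (e : ℝ → ℝ) (q k m : ℕ) (μ : SignedMeasure (Vec d)) : Prop :=
  ∃ a : ℝ, 1 < a ∧ ∃ Cb : ℝ, ∀ᶠ R in atTop,
    La a R ^ (1 + ((k : ℝ) + q) / (2 * m)) * betaE e (La a R ^ ((d : ℝ) / (2 * m))) / R *
      dkSet k μ (Mset e m q R) ≤ Cb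

/-- `e ∈ 𝓔_{a,c}` : `0 < liminf β_e(R)/(R^a (ln R)^c) ≤ limsup β_e(R)/(R^a (ln R)^c) < ∞`. -/
def MemEclass (e : ℝ → ℝ) (a c : ℝ) : Prop :=
  ∃ c₁ c₂ : ℝ, 0 < c₁ ∧ ∀ᶠ R in atTop,
    c₁ * (R ^ a * Real.log R ^ c) ≤ betaE e R ∧ betaE e R ≤ c₂ * (R ^ a * Real.log R ^ c)

/-- Weak derivative with respect to a (positive) measure `μ`:
`∫ ∂_α f · g dμ = (−1)^{|α|} ∫ f · h dμ` for test functions `f`. -/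
def WeakDerivMu (μ : Measure (Vec d)) (α : Fin d → ℕ) (g h : Vec d → ℝ) : Prop :=
  ∀ f : Vec d → ℝ, ContDiff ℝ (⊤ : ℕ∞) f → HasCompactSupport f →
    ∫ x, mderiv α f x * g x ∂μ = (-1 : ℝ) ^ mOrder α * ∫ x, f x * h x ∂μ

/-- The Sobolev norm `‖1‖_{W^{m,p}_μ}` (infimum over admissible families of weak derivatives;
`∞` if `1 ∉ W^{m,p}_μ`). -/
def muSobNorm (μ : Measure (Vec d)) (m : ℕ) (p : ℝ≥0∞) : ℝ≥0∞ :=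
  ⨅ (h : (Fin d → ℕ) → Vec d → ℝ)
    (_ : ∀ α : Fin d → ℕ, 1 ≤ mOrder α → mOrder α ≤ m →
      WeakDerivMu μ α (fun _ => 1) (h α)),
    (eLpNorm (fun _ : Vec d => (1 : ℝ)) p μ +
      ∑' α : {α : Fin d → ℕ // 1 ≤ mOrder α ∧ mOrder α ≤ m}, eLpNorm (h α.1) p μ)

/-- `c_{m,p}(μ) = ‖1‖_{W^{1,p}_μ}^{k_{d,p}} ‖1‖_{W^{m,p}_μ}` with `k_{d,p} = (d−1)/(1−d/p)`. -/
def cMP (μ : Measure (Vec d)) (m : ℕ) (p : ℝ) : ℝ≥0∞ :=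
  muSobNorm μ 1 (ENNReal.ofReal p) ^ (((d : ℝ) - 1) / (1 - d / p)) *
    muSobNorm μ m (ENNReal.ofReal p)

/-- Moment `m_k(μ) = ∫ (1+|x|)^k dμ`. -/
def mMoment (k : ℕ) (μ : Measure (Vec d)) : ℝ≥0∞ :=
  ∫⁻ x, ENNReal.ofReal ((1 + ‖x‖) ^ k) ∂μ

/-- The set `M̃_{m,q,e}(R)`. -/
def MsetT (d' m q : ℕ) (R : ℝ) : Set (SignedMeasure (Vec d')) :=
  {ν | ∃ (κ : Measure (Vec d')) (_ : IsFiniteMeasure κ), ν = κ.toSignedMeasure ∧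
    (∃ p, HasDensity ν p) ∧
    cMP κ (2 * m + q) (2 * (d' + 1)) * mMoment (2 * (d' + 1 + m)) κ ^ ((1 : ℝ)/2) ≤
      ENNReal.ofReal R}

/-- Hypothesis `H̃_q(k,m,e)`. -/
def HqT (e : ℝ → ℝ) (q k m : ℕ) (μ : SignedMeasure (Vec d)) : Prop :=
  ∃ a : ℝ, 1 < a ∧ ∃ Cb : ℝ, ∀ᶠ R in atTop,
    La a R ^ (1 + ((k : ℝ) + q) / (2 * m)) * betaE e (La a R ^ ((d : ℝ) / (2 * m))) / R *
      dkSet k μ (MsetT d m q R) ≤ Cb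

/-! Hermite functions -/

/-- Physicists' Hermite polynomial `H_n(t) = (−1)^n e^{t²} (d/dt)^n e^{−t²}` (as a function). -/
def physHermite (n : ℕ) : ℝ → ℝ :=
  fun t => (-1 : ℝ) ^ n * Real.exp (t ^ 2) * deriv^[n] (fun s => Real.exp (-s ^ 2)) t

/-- `L²`-normalized Hermite functions `h_n`. -/
def hermiteFun (n : ℕ) : ℝ → ℝ :=
  fun t => ((2:ℝ) ^ n * n.factorial * Real.sqrt Real.pi) ^ (-(1:ℝ)/2) * physHermite n t *
    Real.exp (-t ^ 2 / 2)

/-- `d`-dimensional Hermite function `𝓗_α`. -/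
def hermd (α : Fin d → ℕ) (x : Vec d) : ℝ := ∏ i, hermiteFun (α i) (x i)

/-- Kernel `𝓗_n(x,y) = Σ_{|α| = n} 𝓗_α(x) 𝓗_α(y)`. -/
def hermKer (d' n : ℕ) (x y : Vec d') : ℝ :=
  ∑' α : {α : Fin d' → ℕ // mOrder α = n}, hermd α.1 x * hermd α.1 y

/-- Kernel `𝓗_n^a(x,y) = Σ_{j=0}^∞ a(j/4^n) 𝓗_j(x,y)`. -/
def hermKerA (a : ℝ → ℝ) (d' n : ℕ) (x y : Vec d') : ℝ :=
  ∑' j : ℕ, a (j / 4 ^ n) * hermKer d' j x y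

/-- Kernel convolution `(Φ * f)(x) = ∫ Φ(x,y) f(y) dy`. -/
def kconv (Φ : Vec d → Vec d → ℝ) (f : Vec d → ℝ) (x : Vec d) : ℝ :=
  ∫ y, Φ x y * f y

/-- `‖a‖_l = Σ_{i=0}^l sup_{t ≥ 0} |a^{(i)}(t)|`. -/
def aNorm (l : ℕ) (a : ℝ → ℝ) : ℝ :=
  ∑ i ∈ Finset.range (l + 1), ⨆ t : Set.Ici (0:ℝ), |iteratedDeriv i a t|

/-- `d_k` written directly for densities: between `μ_f(dx) = f(x)dx` and `μ_g(dx) = g(x)dx`. -/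
def dkFun (k : ℕ) (f g : Vec d → ℝ) : ℝ :=
  sSup {r : ℝ | ∃ φ : Vec d → ℝ, ContDiff ℝ (⊤ : ℕ∞) φ ∧ supNorm k φ ≤ 1 ∧
    r = |∫ x, φ x * (f x - g x)|}

/-- `d_{k,e_*}` written directly for densities. -/
def dkEFun (e : ℝ → ℝ) (k : ℕ) (f g : Vec d → ℝ) : ℝ :=
  sSup {r : ℝ | ∃ φ : Vec d → ℝ,
    (∑' α : {α : Fin d → ℕ // mOrder α ≤ k}, luxNorm (econj e) (mderiv α.1 φ)) ≠ ∞ ∧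
    luxNorm (econj e) φ ≤ 1 ∧ r = |∫ x, φ x * (f x - g x)|}

end

noncomputable section

variable {d : ℕ}

/-- Dual distance `‖μ̃ − f̃‖_{W_*^{k,∞}}` between a signed measure and a function
(both regarded as elements of `Y = W_*^{k,∞}`). -/
def YdistM (k : ℕ) (μ : SignedMeasure (Vec d)) (f : Vec d → ℝ) : ℝ :=
  sSup {r : ℝ | ∃ φ : Vec d → ℝ, ContDiff ℝ (⊤ : ℕ∞) φ ∧ supNorm k φ ≤ 1 ∧
    r = |sInt μ φ - ∫ x, φ x * f x|}

/-- Membership of `μ̃` in `S_{θ,m,aa}(X,Y)` for `X = W^{2m+q,2m,e}`, `Y = W_*^{k,∞}`. -/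
def memS (e : ℝ → ℝ) (q k m : ℕ) (θ aa : ℝ) (μ : SignedMeasure (Vec d)) : Prop :=
  ∃ F : ℕ → Vec d → ℝ,
    (∑' n : ℕ,
      (ENNReal.ofReal ((2:ℝ) ^ (((n:ℝ) + 1) * θ) * ((n:ℝ) + 1) ^ aa) *
          ENNReal.ofReal (YdistM k μ (F (n+1)))
        + ((2:ℝ≥0∞) ^ (2 * (n+1) * m))⁻¹ * wnorm e (2*m+q) (2*m) (F (n+1)))) ≠ ∞

/-- `K(μ̃, t)` for `X = W^{2m+q,2m,e}`, `Y = W_*^{k,∞}`. -/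
def KfnM (e : ℝ → ℝ) (q k m : ℕ) (μ : SignedMeasure (Vec d)) (t : ℝ) : ℝ≥0∞ :=
  ⨅ f : Vec d → ℝ, ENNReal.ofReal (YdistM k μ f) + ENNReal.ofReal t * wnorm e (2*m+q) (2*m) f

/-- Membership of `μ̃` in `K_{ρ,b}(X,Y)`. -/
def memK (e : ℝ → ℝ) (q k m : ℕ) (r b : ℝ) (μ : SignedMeasure (Vec d)) : Prop :=
  (∫⁻ t in Set.Ioo (0:ℝ) 1,
    ENNReal.ofReal (t ^ (-r - 1) * |Real.log t| ^ b) * KfnM e q k m μ t) ≠ ∞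

/-- Membership of `μ̃` in `B_{u,v}(X,Y)`. -/
def memB (e : ℝ → ℝ) (q k m : ℕ) (u v : ℝ) (μ : SignedMeasure (Vec d)) : Prop :=
  ∃ Cb : ℝ, ∀ᶠ R in atTop,
    R ^ u * Real.log R ^ v *
      sInf {r : ℝ | ∃ f : Vec d → ℝ, wnorm e (2*m+q) (2*m) f ≤ ENNReal.ofReal R ∧
        r = YdistM k μ f} ≤ Cb

/-- The Sobolev norm `Σ_{|α|≤k} ‖∂_α φ‖_{L^p}` of a test function. -/
def sobPNorm (k : ℕ) (p : ℝ) (φ : Vec d → ℝ) : ℝ≥0∞ :=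
  ∑' α : {α : Fin d → ℕ // mOrder α ≤ k}, eLpNorm (mderiv α.1 φ) (ENNReal.ofReal p) volume

/-- The weighted Sobolev norm `‖f‖_{k,l,p} = Σ_{|γ|≤l} Σ_{|α|≤k} ‖x^γ ∂_α f‖_{L^p}`. -/
def wnormP (p : ℝ) (k l : ℕ) (f : Vec d → ℝ) : ℝ≥0∞ :=
  ∑' γ : {γ : Fin d → ℕ // mOrder γ ≤ l}, ∑' α : {α : Fin d → ℕ // mOrder α ≤ k},
    eLpNorm (fun x => (∏ i, x i ^ γ.1 i) * mderiv α.1 f x) (ENNReal.ofReal p) volume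

/-- Dual distance in `Y = W^{−k,p_*} = (W^{k,p_*})^*` between a functional `u` and (the
functional associated with) a function `f`. -/
def YdistD (k : ℕ) (ps : ℝ) (u : (Vec d → ℝ) → ℝ) (f : Vec d → ℝ) : ℝ :=
  sSup {r : ℝ | ∃ φ : Vec d → ℝ, ContDiff ℝ (⊤ : ℕ∞) φ ∧ HasCompactSupport φ ∧
    sobPNorm k ps φ ≤ 1 ∧ r = |u φ - ∫ x, φ x * f x|}

/-- `K(u,t)` for `X = W^{2m+q,2m,p}`, `Y = W^{−k,p_*}`. -/
def KfnD (p ps : ℝ) (q k m : ℕ) (u : (Vec d → ℝ) → ℝ) (t : ℝ) : ℝ≥0∞ :=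
  ⨅ f : Vec d → ℝ,
    ENNReal.ofReal (YdistD k ps u f) + ENNReal.ofReal t * wnormP p (2*m+q) (2*m) f

/-- Membership of `u` in the interpolation space `(W^{2m+q,2m,p}, W^{−k,p_*})_γ`. -/
def memInterpD (p ps ga : ℝ) (q k m : ℕ) (u : (Vec d → ℝ) → ℝ) : Prop :=
  (∫⁻ t in Set.Ioi (0:ℝ), ENNReal.ofReal (t ^ (-ga - 1)) * KfnD p ps q k m u t) ≠ ∞

/-- Dual distance in `Y = W_*^{k,∞}` between a functional `u` and a function `f`. -/
def YdistU (k : ℕ) (u : (Vec d → ℝ) → ℝ) (f : Vec d → ℝ) : ℝ :=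
  sSup {r : ℝ | ∃ φ : Vec d → ℝ, ContDiff ℝ (⊤ : ℕ∞) φ ∧ supNorm k φ ≤ 1 ∧
    r = |u φ - ∫ x, φ x * f x|}

/-- Membership of `u` in `B_{θ,β}(W^{n,l,e}, W_*^{k,∞})`. -/
def memBU (e : ℝ → ℝ) (n l k : ℕ) (θ β : ℝ) (u : (Vec d → ℝ) → ℝ) : Prop :=
  ∃ Cb : ℝ, ∀ᶠ R in atTop,
    R ^ θ * Real.log R ^ β *
      sInf {r : ℝ | ∃ f : Vec d → ℝ, wnorm e n l f ≤ ENNReal.ofReal R ∧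
        r = YdistU k u f} ≤ Cb

/-- `K(u,t)` for `X = W^{n,l,e}`, `Y = W_*^{k,∞}`. -/
def KfnU (e : ℝ → ℝ) (n l k : ℕ) (u : (Vec d → ℝ) → ℝ) (t : ℝ) : ℝ≥0∞ :=
  ⨅ f : Vec d → ℝ, ENNReal.ofReal (YdistU k u f) + ENNReal.ofReal t * wnorm e n l f

/-- Membership of `u` in the interpolation space `(W^{n,l,e}, W_*^{k,∞})_γ`. -/
def memInterpU (e : ℝ → ℝ) (n l k : ℕ) (ga : ℝ) (u : (Vec d → ℝ) → ℝ) : Prop :=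
  (∫⁻ t in Set.Ioi (0:ℝ), ENNReal.ofReal (t ^ (-ga - 1)) * KfnU e n l k u t) ≠ ∞

/-- Super kernel: nonnegative, supported in the unit ball, integral one, all nontrivial
moments vanish. -/
structure IsSuperKernel (d' : ℕ) (φ : Vec d' → ℝ) : Prop where
  nonneg : ∀ x, 0 ≤ φ x
  supp : ∀ x, φ x ≠ 0 → ‖x‖ ≤ 1
  total : (∫ x, φ x) = 1
  moments : ∀ α : Fin d' → ℕ, α ≠ 0 → (∫ x, (∏ i, x i ^ α i) * φ x) = 0

/-- `φ_δ(y) = δ^{−d} φ(y/δ)`. -/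
def dilK (φ : Vec d → ℝ) (δ : ℝ) (y : Vec d) : ℝ := φ (δ⁻¹ • y) / δ ^ d

/-- Convolution of functions `(f * g)(x) = ∫ f(y) g(x−y) dy`. -/
def convF (f g : Vec d → ℝ) (x : Vec d) : ℝ := ∫ y, f y * g (x - y)

end

noncomputable section Abstract

variable {X Y : Type*} [NormedAddCommGroup X] [NormedAddCommGroup Y]

/-- `K(y,t) = inf_{x ∈ X} (‖y − Jx‖_Y + t‖x‖_X)` for a continuous embedding `J : X → Y`. -/
def Kab (J : X → Y) (y : Y) (t : ℝ) : ℝ≥0∞ :=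
  ⨅ x : X, ENNReal.ofReal ‖y - J x‖ + ENNReal.ofReal t * ENNReal.ofReal ‖x‖

/-- `|y|_{γ,b} = ∫₀¹ t^{−γ} |ln t|^b K(y,t) dt/t`. -/
def normGB (J : X → Y) (ga b : ℝ) (y : Y) : ℝ≥0∞ :=
  ∫⁻ t in Set.Ioo (0:ℝ) 1, ENNReal.ofReal (t ^ (-ga - 1) * |Real.log t| ^ b) * Kab J y t

/-- `π_{θ,m,a}(y,(x_n)_n) = Σ_{n=1}^∞ [2^{nθ} n^a ‖y−x_n‖_Y + 2^{−2nm} ‖x_n‖_X]`. -/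
def piAb (J : X → Y) (θ aa : ℝ) (m : ℕ) (y : Y) (x : ℕ → X) : ℝ≥0∞ :=
  ∑' n : ℕ,
    (ENNReal.ofReal ((2:ℝ) ^ (((n:ℝ) + 1) * θ) * ((n:ℝ) + 1) ^ aa) *
        ENNReal.ofReal ‖y - J (x (n+1))‖
      + ((2:ℝ≥0∞) ^ (2 * (n+1) * m))⁻¹ * ENNReal.ofReal ‖x (n+1)‖)

/-- `ρ^{X,Y}_{θ,m,a}(y)`. -/
def rhoAb (J : X → Y) (θ aa : ℝ) (m : ℕ) (y : Y) : ℝ≥0∞ :=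
  ⨅ x : ℕ → X, piAb J θ aa m y x

/-- `d_Y(y, B_X(R))`. -/
def dYball (J : X → Y) (y : Y) (R : ℝ) : ℝ :=
  sInf {r : ℝ | ∃ x : X, ‖x‖ ≤ R ∧ r = ‖y - J x‖}

end Abstract


section YoungAux

variable {e : ℝ → ℝ}

lemma young_half (he : IsYoungE e) : e 1 < e 2 / 2 := by
  have h := he.strictConvexOn.2 (Set.mem_univ (0:ℝ)) (Set.mem_univ (2:ℝ)) (by norm_num)
    (show (0:ℝ) < 1/2 by norm_num) (show (0:ℝ) < 1/2 by norm_num) (by norm_num)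
  simp only [smul_eq_mul, he.zero] at h
  norm_num at h
  linarith

lemma young_gap (he : IsYoungE e) : 0 < e 2 - e 1 := by
  have := young_half he
  have := he.nonneg 1
  linarith

lemma young_cont (he : IsYoungE e) : Continuous e := by
  have h := he.strictConvexOn.convexOn.continuousOn_interior
  rw [interior_univ] at h
  exact continuousOn_univ.mp h

lemma young_bddAbove (he : IsYoungE e) (R : ℝ) : BddAbove {c | e c ≤ R} := by
  refine ⟨max 2 (2 + R / (e 2 - e 1)), fun c hc => ?_⟩
  rcases le_or_gt c 2 with h | h
  · exact le_max_of_le_left h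
  · have hs := he.strictConvexOn.convexOn.slope_mono_adjacent (Set.mem_univ (1:ℝ))
      (Set.mem_univ c) (by norm_num : (1:ℝ) < 2) h
    have hgap := young_gap he
    have hc' : e c ≤ R := hc
    have h2 : e 2 - e 1 ≤ (e c - e 2) / (c - 2) := by
      rw [show (2:ℝ) - 1 = 1 by norm_num, div_one] at hs; exact hs
    have hc2 : 0 < c - 2 := by linarith
    have h3 : (e 2 - e 1) * (c - 2) ≤ e c - e 2 := (le_div_iff₀ hc2).mp h2
    have he2 : 0 ≤ e 2 := he.nonneg 2
    have : c - 2 ≤ R / (e 2 - e 1) := by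
      rw [le_div_iff₀ hgap]
      nlinarith
    exact le_max_of_le_right (by linarith)

lemma young_einv_nonneg (he : IsYoungE e) {R : ℝ} (hR : 0 ≤ R) : 0 ≤ einv e R :=
  le_csSup (young_bddAbove he R) (by simpa [he.zero] using hR)

lemma young_einv_pos (he : IsYoungE e) {R : ℝ} (hR : 0 < R) : 0 < einv e R := by
  set c := min 1 (R / (e 1 + 1)) with hc
  have he1 : 0 ≤ e 1 := he.nonneg 1
  have hcpos : 0 < c := lt_min one_pos (by positivity)
  have hc1 : c ≤ 1 := min_le_left _ _
  have hcv := he.strictConvexOn.convexOn.2 (Set.mem_univ (1:ℝ)) (Set.mem_univ (0:ℝ))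
    hcpos.le (by linarith : (0:ℝ) ≤ 1 - c) (by ring)
  simp only [smul_eq_mul, mul_one, mul_zero, add_zero, he.zero] at hcv
  have hceR : e c ≤ R := by
    refine hcv.trans ?_
    have : c ≤ R / (e 1 + 1) := min_le_right _ _
    have h1 : c * e 1 ≤ (R / (e 1 + 1)) * e 1 := by
      apply mul_le_mul_of_nonneg_right this he1
    refine h1.trans ?_
    rw [div_mul_eq_mul_div, div_le_iff₀ (by linarith)]
    nlinarith
  exact lt_of_lt_of_le hcpos (le_csSup (young_bddAbove he R) hceR)

lemma young_e_einv (he : IsYoungE e) {R : ℝ} (hR : 0 ≤ R) : e (einv e R) = R := by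
  have hcl : IsClosed {c : ℝ | e c ≤ R} := isClosed_le (young_cont he) continuous_const
  have hne : Set.Nonempty {c : ℝ | e c ≤ R} := ⟨0, by simpa [he.zero] using hR⟩
  have hmem := hcl.csSup_mem hne (young_bddAbove he R)
  have hle : e (einv e R) ≤ R := hmem
  rcases hle.lt_or_eq with hlt | heq
  · exfalso
    have hopen : IsOpen {c : ℝ | e c < R} := isOpen_lt (young_cont he) continuous_const
    have hmem2 : einv e R ∈ {c : ℝ | e c < R} := hlt
    rcases Metric.isOpen_iff.mp hopen _ hmem2 with ⟨δ, hδ, hball⟩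
    have hδmem : einv e R + δ/2 ∈ {c : ℝ | e c ≤ R} := by
      have hb : einv e R + δ/2 ∈ Metric.ball (einv e R) δ := by
        rw [Metric.mem_ball, Real.dist_eq]
        rw [show einv e R + δ/2 - einv e R = δ/2 by ring, abs_of_pos (by positivity)]
        linarith
      exact le_of_lt (show e (einv e R + δ/2) < R from hball hb)
    have := le_csSup (young_bddAbove he R) hδmem
    simp only [einv] at this ⊢
    linarith
  · exact heq

lemma young_einv_mono (he : IsYoungE e) {R R' : ℝ} (h0 : 0 ≤ R) (h : R ≤ R') :
    einv e R ≤ einv e R' :=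
  csSup_le_csSup (young_bddAbove he R') ⟨0, by simpa [he.zero] using h0⟩
    (fun c hc => le_trans hc h)

lemma young_beta_nonneg (he : IsYoungE e) {R : ℝ} (hR : 0 ≤ R) : 0 ≤ betaE e R :=
  div_nonneg hR (young_einv_nonneg he hR)

lemma young_beta_mono (he : IsYoungE e) {R R' : ℝ} (hR : 0 < R) (h : R ≤ R') :
    betaE e R ≤ betaE e R' := by
  have hs := young_einv_pos he hR
  have hs' := young_einv_pos he (lt_of_lt_of_le hR h)
  have hm := young_einv_mono he hR.le h
  have := he.ratio_mono _ _ hs hm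
  rwa [young_e_einv he hR.le, young_e_einv he (le_trans hR.le h)] at this

end YoungAux

set_option maxHeartbeats 1600000

/-- Lemma 6.7: if `y ∈ Y` satisfies hypothesis `H(θ,m,e)` (there is `a > 1`
with `limsup_{R→∞} (1/R) L_a(R)^{1+θ/(2m)} β_e(L_a(R)^{d/(2m)}) d_Y(y,B_X(R)) < ∞`), then
one may find a sequence `x_n ∈ X` with
`Σ_{n=1}^∞ [2^{nθ} β_e(2^{nd}) ‖y−x_n‖_Y + 2^{−2nm}‖x_n‖_X] < ∞`. -/
theorem stmt16 {X Y : Type*} [NormedAddCommGroup X] [NormedAddCommGroup Y]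
    [NormedSpace ℝ X] [NormedSpace ℝ Y]
    (J : X →ₗ[ℝ] Y) (hJ : ∃ c : ℝ, ∀ x, ‖J x‖ ≤ c * ‖x‖)
    (e : ℝ → ℝ) (he : IsYoungE e) (θ : ℝ) (hθ : 0 ≤ θ) (m : ℕ) (hm : 1 ≤ m)
    (d : ℕ) (hd : 0 < d)
    (y : Y)
    (hy : ∃ a : ℝ, 1 < a ∧ ∃ Cb : ℝ, ∀ᶠ R in atTop,
      La a R ^ (1 + θ / (2 * m)) * betaE e (La a R ^ ((d : ℝ) / (2 * m))) / R *
        dYball J y R ≤ Cb) :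
    ∃ x : ℕ → X,
      (∑' n : ℕ,
        (ENNReal.ofReal ((2 : ℝ) ^ (((n : ℝ) + 1) * θ) * betaE e ((2 : ℝ) ^ ((n + 1) * d))) *
            ENNReal.ofReal ‖y - J (x (n + 1))‖
          + ((2 : ℝ≥0∞) ^ (2 * (n + 1) * m))⁻¹ * ENNReal.ofReal ‖x (n + 1)‖)) ≠ ∞ := by
  classical
  obtain ⟨a, ha, Cb0, hev0⟩ := hy
  set Cb : ℝ := max Cb0 0 with hCbdef
  have hev : ∀ᶠ R in atTop,
      La a R ^ (1 + θ / (2 * m)) * betaE e (La a R ^ ((d : ℝ) / (2 * m))) / R *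
        dYball J y R ≤ Cb := hev0.mono (fun R h => h.trans (le_max_left _ _))
  have hCb : 0 ≤ Cb := le_max_right _ _
  set s : ℝ := (1 + a) / 2 with hsdef
  have hs1 : 1 < s := by rw [hsdef]; linarith
  have hsa : s < a := by rw [hsdef]; linarith
  have hspos : 0 < s := by linarith
  have hm' : (1 : ℝ) ≤ (m : ℝ) := by exact_mod_cast hm
  have hmpos : (0 : ℝ) < (m : ℝ) := by linarith
  set R : ℕ → ℝ := fun k => 2 ^ (2 * k * m) / (k : ℝ) ^ s with hRdef
  have hRnonneg : ∀ k, 0 ≤ R k := fun k =>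
    div_nonneg (by positivity) (Real.rpow_nonneg (Nat.cast_nonneg k) s)
  have hRpos : ∀ k : ℕ, 1 ≤ k → 0 < R k := by
    intro k hk
    have : (0:ℝ) < (k:ℝ) := by exact_mod_cast hk
    exact div_pos (by positivity) (Real.rpow_pos_of_pos this s)
  -- logarithmic lower bound
  have hlog : ∀ᶠ k : ℕ in atTop, (k : ℝ) ≤ Real.log (R k) := by
    have hlog2 : (0.6931471803 : ℝ) < Real.log 2 := Real.log_two_gt_d9
    have hcpos : 0 < (2 * Real.log 2 - 1) / s := by
      apply div_pos (by linarith) hspos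
    have h1 := Real.isLittleO_log_id_atTop.def hcpos
    have h2 : Tendsto (fun k : ℕ => (k : ℝ)) atTop atTop := tendsto_natCast_atTop_atTop
    filter_upwards [h2.eventually h1, eventually_ge_atTop 1] with k hk hk1
    have hk1' : (1 : ℝ) ≤ (k : ℝ) := by exact_mod_cast hk1
    have hkpos : (0 : ℝ) < (k : ℝ) := by linarith
    have hlogR : Real.log (R k) = (2 * k * m : ℕ) * Real.log 2 - s * Real.log k := by
      rw [hRdef]
      simp only
      rw [Real.log_div (by positivity) (by positivity), Real.log_pow, Real.log_rpow hkpos]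
    have hlk : Real.log (k : ℝ) ≤ (2 * Real.log 2 - 1) / s * (k : ℝ) := by
      have h := hk
      simp only [id_eq, Real.norm_eq_abs] at h
      rw [abs_of_nonneg (Real.log_nonneg hk1'), abs_of_nonneg hkpos.le] at h
      exact h
    have hslk : s * Real.log (k : ℝ) ≤ (2 * Real.log 2 - 1) * (k : ℝ) := by
      have := mul_le_mul_of_nonneg_left hlk hspos.le
      calc s * Real.log (k:ℝ) ≤ s * ((2 * Real.log 2 - 1) / s * (k:ℝ)) := this
        _ = (2 * Real.log 2 - 1) * (k:ℝ) := by field_simp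
    rw [hlogR]
    push_cast
    nlinarith [mul_nonneg (mul_nonneg (by linarith : (0:ℝ) ≤ 2 * (k:ℝ))
      (by linarith : (0:ℝ) ≤ (m:ℝ) - 1)) (by linarith : (0:ℝ) ≤ Real.log 2)]
  have hRtop : Tendsto R atTop atTop := by
    apply tendsto_atTop_mono' atTop ?_ tendsto_natCast_atTop_atTop
    filter_upwards [hlog, eventually_ge_atTop 1] with k hk hk1
    have hRk : 0 < R k := hRpos k hk1
    have := Real.log_le_sub_one_of_pos hRk
    linarith
  -- the coefficients
  set B : ℕ → ℝ := fun k => 2 ^ ((k : ℝ) * θ) * betaE e ((2:ℝ) ^ (k * d)) with hBdef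
  have hBnonneg : ∀ k, 0 ≤ B k := fun k =>
    mul_nonneg (Real.rpow_nonneg (by norm_num) _) (young_beta_nonneg he (by positivity))
  set δ : ℕ → ℝ := fun k => (1/2 : ℝ) ^ k / (1 + B k) with hδdef
  have hδpos : ∀ k, 0 < δ k := fun k =>
    div_pos (by positivity) (by linarith [hBnonneg k])
  have hBδ : ∀ k, B k * δ k ≤ (1/2 : ℝ) ^ k := by
    intro k
    have h1 : 0 < 1 + B k := by linarith [hBnonneg k]
    rw [hδdef]
    simp only
    rw [mul_div_assoc']
    rw [div_le_iff₀ h1]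
    have := hBnonneg k
    nlinarith [pow_nonneg (by norm_num : (0:ℝ) ≤ 1/2) k]
  -- choose approximants
  have hx : ∀ k, ∃ xx : X, ‖xx‖ ≤ R k ∧ ‖y - J xx‖ ≤ dYball J y (R k) + δ k := by
    intro k
    have hne : Set.Nonempty {r : ℝ | ∃ x : X, ‖x‖ ≤ R k ∧ r = ‖y - J x‖} :=
      ⟨‖y - J 0‖, 0, by simpa using hRnonneg k, rfl⟩
    have hbdd : BddBelow {r : ℝ | ∃ x : X, ‖x‖ ≤ R k ∧ r = ‖y - J x‖} :=
      ⟨0, by rintro r ⟨x, -, rfl⟩; exact norm_nonneg _⟩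
    have hlt : sInf {r : ℝ | ∃ x : X, ‖x‖ ≤ R k ∧ r = ‖y - J x‖} <
        dYball J y (R k) + δ k := by
      have : dYball J y (R k) = sInf {r : ℝ | ∃ x : X, ‖x‖ ≤ R k ∧ r = ‖y - J x‖} := rfl
      rw [← this]
      exact lt_add_of_pos_right _ (hδpos k)
    rcases (csInf_lt_iff hbdd hne).mp hlt with ⟨r, ⟨xx, hxx, rfl⟩, hrlt⟩
    exact ⟨xx, hxx, hrlt.le⟩
  choose x hx1 hx2 using hx
  have hdY0 : ∀ k, 0 ≤ dYball J y (R k) := by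
    intro k
    apply Real.sInf_nonneg
    rintro r ⟨xx, -, rfl⟩
    exact norm_nonneg _
  -- the main eventual bound
  have hmain : ∀ᶠ k : ℕ in atTop, B k * dYball J y (R k) ≤ Cb / (k : ℝ) ^ s := by
    filter_upwards [hlog, hRtop.eventually hev, eventually_ge_atTop 1] with k hlogk hevk hk1
    have hk1' : (1 : ℝ) ≤ (k : ℝ) := by exact_mod_cast hk1
    have hkpos : (0 : ℝ) < (k : ℝ) := by linarith
    have hRk : 0 < R k := hRpos k hk1
    have hlog0 : (0 : ℝ) ≤ Real.log (R k) := by linarith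
    have hkrs : (0:ℝ) < (k:ℝ) ^ s := Real.rpow_pos_of_pos hkpos s
    have hpow : (k : ℝ) ^ s ≤ Real.log (R k) ^ a :=
      calc (k : ℝ) ^ s ≤ (k : ℝ) ^ a := Real.rpow_le_rpow_of_exponent_le hk1' hsa.le
        _ ≤ Real.log (R k) ^ a :=
          Real.rpow_le_rpow (by linarith) hlogk (by linarith)
    have hLa : (2 : ℝ) ^ (2 * k * m) ≤ La a (R k) := by
      have h1 : (2 : ℝ) ^ (2 * k * m) = R k * (k : ℝ) ^ s := by
        rw [hRdef]; field_simp
      rw [La, h1]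
      exact mul_le_mul_of_nonneg_left hpow (hRnonneg k)
    have h2pow1 : (1 : ℝ) ≤ (2 : ℝ) ^ (2 * k * m) := one_le_pow₀ (by norm_num)
    have hLa0 : (0 : ℝ) < La a (R k) := by linarith
    have hmne : (2 : ℝ) * (m : ℝ) ≠ 0 := by positivity
    have hexp1 : ((2 : ℝ) ^ (2 * k * m) : ℝ) ^ (1 + θ / (2 * (m:ℝ))) =
        (2 : ℝ) ^ (2 * k * m) * (2 : ℝ) ^ ((k : ℝ) * θ) := by
      rw [← Real.rpow_natCast 2 (2 * k * m), ← Real.rpow_mul (by norm_num),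
        ← Real.rpow_add (by norm_num)]
      congr 1
      push_cast
      field_simp
    have hexp2 : ((2 : ℝ) ^ (2 * k * m) : ℝ) ^ ((d : ℝ) / (2 * (m:ℝ))) =
        (2 : ℝ) ^ (k * d) := by
      rw [← Real.rpow_natCast 2 (2 * k * m), ← Real.rpow_mul (by norm_num),
        ← Real.rpow_natCast 2 (k * d)]
      congr 1
      push_cast
      field_simp
    have h1 : (2 : ℝ) ^ (2 * k * m) * (2 : ℝ) ^ ((k : ℝ) * θ) ≤
        La a (R k) ^ (1 + θ / (2 * (m:ℝ))) := by
      rw [← hexp1]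
      exact Real.rpow_le_rpow (by positivity) hLa (by positivity)
    have h2 : (2 : ℝ) ^ (k * d) ≤ La a (R k) ^ ((d : ℝ) / (2 * (m:ℝ))) := by
      rw [← hexp2]
      exact Real.rpow_le_rpow (by positivity) hLa (by positivity)
    have hβ : betaE e ((2:ℝ) ^ (k * d)) ≤ betaE e (La a (R k) ^ ((d : ℝ) / (2 * (m:ℝ)))) :=
      young_beta_mono he (by positivity) h2
    have hβ2 : 0 ≤ betaE e (La a (R k) ^ ((d : ℝ) / (2 * (m:ℝ)))) :=
      young_beta_nonneg he (Real.rpow_nonneg hLa0.le _)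
    set P := La a (R k) ^ (1 + θ / (2 * (m:ℝ))) *
      betaE e (La a (R k) ^ ((d : ℝ) / (2 * (m:ℝ)))) with hPdef
    have hPdY : P * dYball J y (R k) ≤ Cb * R k := by
      have h := hevk
      rw [div_mul_eq_mul_div, div_le_iff₀ hRk] at h
      exact h
    have hBP : B k * 2 ^ (2 * k * m) ≤ P := by
      rw [hBdef, hPdef]
      calc (2:ℝ) ^ ((k:ℝ) * θ) * betaE e ((2:ℝ) ^ (k * d)) * 2 ^ (2 * k * m)
          = ((2:ℝ) ^ (2 * k * m) * 2 ^ ((k:ℝ) * θ)) * betaE e ((2:ℝ) ^ (k * d)) := by ring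
        _ ≤ La a (R k) ^ (1 + θ / (2 * (m:ℝ))) *
            betaE e (La a (R k) ^ ((d : ℝ) / (2 * (m:ℝ)))) := by
          apply mul_le_mul h1 hβ (young_beta_nonneg he (by positivity))
          exact le_trans (by positivity) h1
    have hstep : B k * dYball J y (R k) * 2 ^ (2 * k * m) ≤ Cb * R k := by
      calc B k * dYball J y (R k) * 2 ^ (2 * k * m)
          = (B k * 2 ^ (2 * k * m)) * dYball J y (R k) := by ring
        _ ≤ P * dYball J y (R k) := mul_le_mul_of_nonneg_right hBP (hdY0 k)
        _ ≤ Cb * R k := hPdY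
    have h2pos : (0:ℝ) < (2:ℝ) ^ (2 * k * m) := by positivity
    rw [← le_div_iff₀ h2pos] at hstep
    refine hstep.trans (le_of_eq ?_)
    rw [hRdef]
    field_simp
  obtain ⟨N, hN⟩ := eventually_atTop.mp hmain
  refine ⟨x, ?_⟩
  -- the summable majorant
  set w : ℕ → ℝ := fun k => Cb / (k : ℝ) ^ s + (1/2 : ℝ) ^ k + 1 / (k : ℝ) ^ s with hwdef
  have hwnonneg : ∀ k, 0 ≤ w k := by
    intro k
    have h1 : (0:ℝ) ≤ (k:ℝ) ^ s := Real.rpow_nonneg (Nat.cast_nonneg k) s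
    have := pow_nonneg (by norm_num : (0:ℝ) ≤ 1/2) k
    have h2 : (0:ℝ) ≤ Cb / (k:ℝ) ^ s := div_nonneg hCb h1
    have h3 : (0:ℝ) ≤ 1 / (k:ℝ) ^ s := div_nonneg zero_le_one h1
    rw [hwdef]; dsimp only; linarith
  have hw : Summable w := by
    have h1 : Summable (fun k : ℕ => 1 / (k : ℝ) ^ s) :=
      Real.summable_one_div_nat_rpow.mpr hs1
    have h2 : Summable (fun k : ℕ => Cb / (k : ℝ) ^ s) := by
      have := h1.mul_left Cb
      refine this.congr (fun k => ?_)
      rw [mul_one_div]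
    exact (h2.add summable_geometric_two).add h1
  -- per-term bound
  have hterm : ∀ n : ℕ, N ≤ n + 1 →
      (ENNReal.ofReal ((2 : ℝ) ^ (((n : ℝ) + 1) * θ) * betaE e ((2 : ℝ) ^ ((n + 1) * d))) *
          ENNReal.ofReal ‖y - J (x (n + 1))‖
        + ((2 : ℝ≥0∞) ^ (2 * (n + 1) * m))⁻¹ * ENNReal.ofReal ‖x (n + 1)‖) ≤
      ENNReal.ofReal (w (n + 1)) := by
    intro n hn
    set k := n + 1 with hkdef
    have hcast : ((n : ℝ) + 1) = ((k : ℕ) : ℝ) := by rw [hkdef]; push_cast; ring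
    have hfirst : ENNReal.ofReal ((2 : ℝ) ^ (((n : ℝ) + 1) * θ) *
        betaE e ((2 : ℝ) ^ ((n + 1) * d))) = ENNReal.ofReal (B k) := by
      rw [hBdef, hcast]
    have h2e : ((2 : ℝ≥0∞) ^ (2 * k * m)) = ENNReal.ofReal ((2:ℝ) ^ (2 * k * m)) := by
      rw [ENNReal.ofReal_pow (by norm_num)]
      norm_num
    have h2pos : (0:ℝ) < (2:ℝ) ^ (2 * k * m) := by positivity
    have hinv : ((2 : ℝ≥0∞) ^ (2 * k * m))⁻¹ =
        ENNReal.ofReal (((2:ℝ) ^ (2 * k * m))⁻¹) := by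
      rw [h2e, ← ENNReal.ofReal_inv_of_pos h2pos]
    calc ENNReal.ofReal ((2 : ℝ) ^ (((n : ℝ) + 1) * θ) * betaE e ((2 : ℝ) ^ ((n + 1) * d))) *
          ENNReal.ofReal ‖y - J (x (n + 1))‖
        + ((2 : ℝ≥0∞) ^ (2 * (n + 1) * m))⁻¹ * ENNReal.ofReal ‖x (n + 1)‖
        ≤ ENNReal.ofReal (B k) * ENNReal.ofReal (dYball J y (R k) + δ k)
          + ENNReal.ofReal (((2:ℝ) ^ (2 * k * m))⁻¹) * ENNReal.ofReal (R k) := by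
          rw [hfirst, hinv]
          exact add_le_add
            (mul_le_mul_right (ENNReal.ofReal_le_ofReal (hx2 k)) _)
            (mul_le_mul_right (ENNReal.ofReal_le_ofReal (hx1 k)) _)
      _ = ENNReal.ofReal (B k * (dYball J y (R k) + δ k)
            + ((2:ℝ) ^ (2 * k * m))⁻¹ * R k) := by
          rw [← ENNReal.ofReal_mul (hBnonneg k), ← ENNReal.ofReal_mul
              (by positivity : (0:ℝ) ≤ ((2:ℝ) ^ (2 * k * m))⁻¹),
            ← ENNReal.ofReal_add (mul_nonneg (hBnonneg k)
              (add_nonneg (hdY0 k) (hδpos k).le)) (by positivity)]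
      _ ≤ ENNReal.ofReal (w k) := by
          apply ENNReal.ofReal_le_ofReal
          have hb1 : B k * dYball J y (R k) ≤ Cb / (k : ℝ) ^ s := hN k hn
          have hb2 : B k * δ k ≤ (1/2:ℝ) ^ k := hBδ k
          have hb3 : ((2:ℝ) ^ (2 * k * m))⁻¹ * R k = 1 / (k : ℝ) ^ s := by
            rw [hRdef]
            field_simp
          rw [hwdef]
          dsimp only
          rw [mul_add]
          rw [hb3]
          linarith
  -- conclude
  rw [← Summable.sum_add_tsum_nat_add' (k := N) ENNReal.summable]
  refine ENNReal.add_ne_top.mpr ⟨?_, ?_⟩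
  · refine (ENNReal.sum_lt_top.mpr fun i _ => ?_).ne
    refine ENNReal.add_lt_top.mpr ⟨?_, ?_⟩
    · exact ENNReal.mul_lt_top ENNReal.ofReal_lt_top ENNReal.ofReal_lt_top
    · refine ENNReal.mul_lt_top ?_ ENNReal.ofReal_lt_top
      simp only [ENNReal.inv_lt_top]
      exact ENNReal.pow_pos (by norm_num) _
  · have hble : ∀ i : ℕ,
        (ENNReal.ofReal ((2 : ℝ) ^ ((((i + N : ℕ) : ℝ) + 1) * θ) *
            betaE e ((2 : ℝ) ^ ((i + N + 1) * d))) *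
          ENNReal.ofReal ‖y - J (x (i + N + 1))‖
        + ((2 : ℝ≥0∞) ^ (2 * (i + N + 1) * m))⁻¹ * ENNReal.ofReal ‖x (i + N + 1)‖) ≤
        ENNReal.ofReal (w (i + N + 1)) := fun i => hterm (i + N) (by omega)
    have hsum : Summable (fun i : ℕ => w (i + (N + 1))) := (summable_nat_add_iff (N + 1)).mpr hw
    have heq : ENNReal.ofReal (∑' i : ℕ, w (i + (N + 1))) =
        ∑' i : ℕ, ENNReal.ofReal (w (i + (N + 1))) :=
      ENNReal.ofReal_tsum_of_nonneg (fun i => hwnonneg _) hsum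
    refine ne_top_of_le_ne_top (ENNReal.ofReal_ne_top
      (r := ∑' i : ℕ, w (i + (N + 1)))) ?_
    calc (∑' i : ℕ,
          (ENNReal.ofReal ((2 : ℝ) ^ ((((i + N : ℕ) : ℝ) + 1) * θ) *
              betaE e ((2 : ℝ) ^ ((i + N + 1) * d))) *
            ENNReal.ofReal ‖y - J (x (i + N + 1))‖
          + ((2 : ℝ≥0∞) ^ (2 * (i + N + 1) * m))⁻¹ * ENNReal.ofReal ‖x (i + N + 1)‖))
        ≤ ∑' i : ℕ, ENNReal.ofReal (w (i + (N + 1))) := by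
          refine ENNReal.tsum_le_tsum (fun i => ?_)
          have := hble i
          simpa [add_assoc] using this
      _ = ENNReal.ofReal (∑' i : ℕ, w (i + (N + 1))) := heq.symm
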